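/- arXiv:1303.1208 — 7 statements merged into one kernel-verified Lean document; each statement's English description precedes it below -/
import Mathlib

section
/- Let π₀, π₁ ∈ [0,1) with π₀ + π₁ < 1, and let γ ≥ 0. Define λ = (π₁ + γ(1-π₁))/(1 - π₀ + γπ₀). Let p₀, p₁ be nonnegative functions (densities) and define p̃₀ = (1-π₀)p₀ + π₀p₁ and p̃₁ = (1-π₁)p₁ + π₁p₀. Then for every x with p₀(x) > 0 and p̃₀(x) > 0, one has p₁(x)/p₀(x) > γ if and only if p̃₁(x)/p̃₀(x) > λ. -/
theorem lrt_threshold_transform {X : Type*} (π₀ π₁ γ lam : ℝ)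
    (hπ₀ : π₀ ∈ Set.Ico (0:ℝ) 1) (hπ₁ : π₁ ∈ Set.Ico (0:ℝ) 1)
    (hsum : π₀ + π₁ < 1) (hγ : 0 ≤ γ)
    (hlam : lam = (π₁ + γ * (1 - π₁)) / (1 - π₀ + γ * π₀))
    (p₀ p₁ : X → ℝ) (hp₀ : ∀ x, 0 ≤ p₀ x) (hp₁ : ∀ x, 0 ≤ p₁ x)
    (x : X) (hx : 0 < p₀ x) (hx' : 0 < (1 - π₀) * p₀ x + π₀ * p₁ x) :
    p₁ x / p₀ x > γ ↔
      ((1 - π₁) * p₁ x + π₁ * p₀ x) / ((1 - π₀) * p₀ x + π₀ * p₁ x) > lam := by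
  have hD : 0 < 1 - π₀ + γ * π₀ := by nlinarith [hπ₀.1, hπ₀.2, hγ]
  subst hlam
  rw [gt_iff_lt, lt_div_iff₀ hx, gt_iff_lt, lt_div_iff₀ hx', div_mul_eq_mul_div,
    div_lt_iff₀ hD]
  constructor
  · intro h
    nlinarith [mul_pos (by linarith : (0:ℝ) < 1 - π₀ - π₁)
      (by linarith : 0 < p₁ x - γ * p₀ x)]
  · intro h
    by_contra hc
    push_neg at hc
    nlinarith [mul_nonneg (by linarith : (0:ℝ) ≤ 1 - π₀ - π₁)
      (by linarith : 0 ≤ γ * p₀ x - p₁ x)]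
end

section
/- Let π₀, π₁ ∈ [0,1) with π₀ + π₁ < 1, and let P₀ ≠ P₁ be probability measures. Define P̃₀ = (1-π₀)P₀ + π₀P₁ and P̃₁ = (1-π₁)P₁ + π₁P₀. Then with π̃₀ = π₀/(1-π₁) and π̃₁ = π₁/(1-π₀), one has π̃₀, π̃₁ ∈ [0,1), P̃₀ = (1-π̃₀)P₀ + π̃₀P̃₁, and P̃₁ = (1-π̃₁)P₁ + π̃₁P̃₀. Moreover, these values of π̃₀, π̃₁ are the unique ones in [0,1) for which these two identities hold. -/
open MeasureTheory

/-- The mixture `(1-a)·P + a·Q` of two measures. -/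
noncomputable def mix {X : Type*} [MeasurableSpace X] (a : ℝ) (P Q : Measure X) :
    Measure X :=
  ENNReal.ofReal (1 - a) • P + ENNReal.ofReal a • Q

/-- `G` is irreducible with respect to `H`: no decomposition `G = γ·H + (1-γ)·F'`
with `F'` a probability measure and `0 < γ ≤ 1`. -/
def Irred {X : Type*} [MeasurableSpace X] (G H : Measure X) : Prop :=
  ¬ ∃ (γ : ℝ) (F' : Measure X), IsProbabilityMeasure F' ∧ 0 < γ ∧ γ ≤ 1 ∧
      G = mix γ F' H

/-- Mutual irreducibility. -/
def MutIrred {X : Type*} [MeasurableSpace X] (P Q : Measure X) : Prop :=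
  Irred P Q ∧ Irred Q P

/-- The set of feasible mixture proportions of `H` in `F`. -/
def nuSet {X : Type*} [MeasurableSpace X] (F H : Measure X) : Set ℝ :=
  {α | α ∈ Set.Icc (0:ℝ) 1 ∧
    ∃ G' : Measure X, IsProbabilityMeasure G' ∧ F = mix α G' H}

/-- `ν*(F,H)`: the maximal proportion of `H` in `F`. -/
noncomputable def nuStar {X : Type*} [MeasurableSpace X] (F H : Measure X) : ℝ :=
  sSup (nuSet F H)

lemma mix_mix {X : Type*} [MeasurableSpace X] (a c : ℝ) (ha : 0 ≤ a) (ha1 : a ≤ 1)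
    (hc : 0 ≤ c) (P Q : Measure X) :
    mix a P (mix c Q P) = mix (a * (1 - c)) P Q := by
  unfold mix
  rw [smul_add, smul_smul, smul_smul, ← ENNReal.ofReal_mul ha, ← ENNReal.ofReal_mul ha]
  have h1 : ENNReal.ofReal (1 - a) + ENNReal.ofReal (a * c)
      = ENNReal.ofReal (1 - a * (1 - c)) := by
    rw [← ENNReal.ofReal_add (by linarith) (by positivity)]
    ring_nf
  calc ENNReal.ofReal (1 - a) • P + (ENNReal.ofReal (a * (1 - c)) • Q + ENNReal.ofReal (a * c) • P)
      = (ENNReal.ofReal (1 - a) + ENNReal.ofReal (a * c)) • P + ENNReal.ofReal (a * (1 - c)) • Q := by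
        rw [add_smul]; abel
    _ = ENNReal.ofReal (1 - a * (1 - c)) • P + ENNReal.ofReal (a * (1 - c)) • Q := by rw [h1]

lemma coeff_unique {X : Type*} [MeasurableSpace X] (P Q : Measure X)
    [IsProbabilityMeasure P] [IsProbabilityMeasure Q] (hne : P ≠ Q)
    (α β : ℝ) (hα0 : 0 ≤ α) (hα1 : α ≤ 1) (hβ0 : 0 ≤ β) (hβ1 : β ≤ 1)
    (h : mix α P Q = mix β P Q) : α = β := by
  obtain ⟨A, hA, hAne⟩ : ∃ A, MeasurableSet A ∧ P A ≠ Q A := by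
    by_contra hcon
    push_neg at hcon
    exact hne (Measure.ext fun A hA => hcon A hA)
  have hPfin : P A ≠ ⊤ := (measure_lt_top P A).ne
  have hQfin : Q A ≠ ⊤ := (measure_lt_top Q A).ne
  have := congrArg (fun μ : Measure X => (μ A).toReal) h
  simp only [mix, Measure.coe_add, Pi.add_apply, Measure.smul_apply, smul_eq_mul] at this
  rw [ENNReal.toReal_add (by finiteness) (by finiteness),
      ENNReal.toReal_add (by finiteness) (by finiteness),
      ENNReal.toReal_mul, ENNReal.toReal_mul, ENNReal.toReal_mul, ENNReal.toReal_mul,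
      ENNReal.toReal_ofReal (by linarith), ENNReal.toReal_ofReal hα0,
      ENNReal.toReal_ofReal (by linarith), ENNReal.toReal_ofReal hβ0] at this
  have hpq : (P A).toReal ≠ (Q A).toReal := fun hh =>
    hAne ((ENNReal.toReal_eq_toReal_iff' hPfin hQfin).mp hh)
  have : (α - β) * ((Q A).toReal - (P A).toReal) = 0 := by linarith
  rcases mul_eq_zero.mp this with h' | h'
  · linarith
  · exact absurd (by linarith : (P A).toReal = (Q A).toReal) hpq

theorem decoupled_representation {X : Type*} [MeasurableSpace X] (π₀ π₁ : ℝ)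
    (hπ₀ : π₀ ∈ Set.Ico (0:ℝ) 1) (hπ₁ : π₁ ∈ Set.Ico (0:ℝ) 1)
    (hsum : π₀ + π₁ < 1)
    (P₀ P₁ Pt₀ Pt₁ : Measure X)
    [IsProbabilityMeasure P₀] [IsProbabilityMeasure P₁]
    (hne : P₀ ≠ P₁)
    (hPt₀ : Pt₀ = mix π₀ P₀ P₁) (hPt₁ : Pt₁ = mix π₁ P₁ P₀) :
    (π₀ / (1 - π₁)) ∈ Set.Ico (0:ℝ) 1 ∧ (π₁ / (1 - π₀)) ∈ Set.Ico (0:ℝ) 1 ∧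
    Pt₀ = mix (π₀ / (1 - π₁)) P₀ Pt₁ ∧ Pt₁ = mix (π₁ / (1 - π₀)) P₁ Pt₀ ∧
    ∀ a b : ℝ, a ∈ Set.Ico (0:ℝ) 1 → b ∈ Set.Ico (0:ℝ) 1 →
      Pt₀ = mix a P₀ Pt₁ → Pt₁ = mix b P₁ Pt₀ →
      a = π₀ / (1 - π₁) ∧ b = π₁ / (1 - π₀) := by
  obtain ⟨hπ₀0, hπ₀1⟩ := hπ₀
  obtain ⟨hπ₁0, hπ₁1⟩ := hπ₁
  have h1π₁ : (0:ℝ) < 1 - π₁ := by linarith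
  have h1π₀ : (0:ℝ) < 1 - π₀ := by linarith
  have ha0 : 0 ≤ π₀ / (1 - π₁) := div_nonneg hπ₀0 h1π₁.le
  have ha1 : π₀ / (1 - π₁) < 1 := (div_lt_one h1π₁).mpr (by linarith)
  have hb0 : 0 ≤ π₁ / (1 - π₀) := div_nonneg hπ₁0 h1π₀.le
  have hb1 : π₁ / (1 - π₀) < 1 := (div_lt_one h1π₀).mpr (by linarith)
  have hamul : π₀ / (1 - π₁) * (1 - π₁) = π₀ := div_mul_cancel₀ _ h1π₁.ne'
  have hbmul : π₁ / (1 - π₀) * (1 - π₀) = π₁ := div_mul_cancel₀ _ h1π₀.ne'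
  refine ⟨⟨ha0, ha1⟩, ⟨hb0, hb1⟩, ?_, ?_, ?_⟩
  · rw [hPt₁, mix_mix _ _ ha0 ha1.le hπ₁0, hamul, hPt₀]
  · rw [hPt₀, mix_mix _ _ hb0 hb1.le hπ₀0, hbmul, hPt₁]
  · intro a b ⟨haa0, haa1⟩ ⟨hbb0, hbb1⟩ h₀ h₁
    rw [hPt₁, mix_mix _ _ haa0 haa1.le hπ₁0] at h₀
    rw [hPt₀, mix_mix _ _ hbb0 hbb1.le hπ₀0] at h₁
    have e₀ : π₀ = a * (1 - π₁) :=
      coeff_unique P₀ P₁ hne _ _ hπ₀0 hπ₀1.le (by positivity)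
        (by nlinarith) (hPt₀ ▸ h₀)
    have e₁ : π₁ = b * (1 - π₀) :=
      coeff_unique P₁ P₀ (Ne.symm hne) _ _ hπ₁0 hπ₁1.le (by positivity)
        (by nlinarith) (hPt₁ ▸ h₁)
    constructor
    · field_simp [e₀]; linarith
    · field_simp [e₁]; linarith
end

section
/- Let π̃₀, π̃₁ ∈ [0,1) and let P₀, P₁, P̃₀, P̃₁ be probability measures with P̃₀ ≠ P̃₁ satisfying P̃₀ = (1-π̃₀)P₀ + π̃₀P̃₁ and P̃₁ = (1-π̃₁)P₁ + π̃₁P̃₀. Then P₀ ≠ P₁, and setting π₀ = π̃₀(1-π̃₁)/(1-π̃₀π̃₁) and π₁ = π̃₁(1-π̃₀)/(1-π̃₀π̃₁), one has π₀ + π₁ < 1, P̃₀ = (1-π₀)P₀ + π₀P₁, and P̃₁ = (1-π₁)P₁ + π₁P₀. These π₀, π₁ are the unique values in [0,1) for which the last two identities hold. -/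
open MeasureTheory

lemma mix_apply {X : Type*} [MeasurableSpace X] (a : ℝ) (P Q : Measure X) (s : Set X) :
    mix a P Q s = ENNReal.ofReal (1 - a) * P s + ENNReal.ofReal a * Q s := by
  simp [mix]

lemma mix_ne_top {X : Type*} [MeasurableSpace X] (a : ℝ) (P Q : Measure X)
    [IsFiniteMeasure P] [IsFiniteMeasure Q] (s : Set X) : mix a P Q s ≠ ⊤ := by
  rw [mix_apply]
  exact ENNReal.add_ne_top.2 ⟨ENNReal.mul_ne_top ENNReal.ofReal_ne_top (measure_ne_top P s),
    ENNReal.mul_ne_top ENNReal.ofReal_ne_top (measure_ne_top Q s)⟩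

lemma mix_toReal {X : Type*} [MeasurableSpace X] {a : ℝ} (ha0 : 0 ≤ a) (ha1 : a ≤ 1)
    (P Q : Measure X) [IsFiniteMeasure P] [IsFiniteMeasure Q] (s : Set X) :
    (mix a P Q s).toReal = (1 - a) * (P s).toReal + a * (Q s).toReal := by
  rw [mix_apply, ENNReal.toReal_add (ENNReal.mul_ne_top ENNReal.ofReal_ne_top (measure_ne_top P s))
    (ENNReal.mul_ne_top ENNReal.ofReal_ne_top (measure_ne_top Q s)),
    ENNReal.toReal_mul, ENNReal.toReal_mul,
    ENNReal.toReal_ofReal (by linarith), ENNReal.toReal_ofReal ha0]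

lemma mix_self {X : Type*} [MeasurableSpace X] {a : ℝ} (ha0 : 0 ≤ a) (ha1 : a ≤ 1)
    (P : Measure X) : mix a P P = P := by
  unfold mix
  rw [← add_smul, ← ENNReal.ofReal_add (by linarith) ha0]
  norm_num

lemma mix_inj {X : Type*} [MeasurableSpace X] {a c : ℝ} (ha0 : 0 ≤ a) (ha1 : a ≤ 1)
    (hc0 : 0 ≤ c) (hc1 : c ≤ 1) {P Q : Measure X}
    [IsFiniteMeasure P] [IsFiniteMeasure Q] (hPQ : P ≠ Q)
    (h : mix a P Q = mix c P Q) : a = c := by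
  by_contra hac
  apply hPQ
  ext s hs
  have h' := congrArg (fun μ : Measure X => (μ s).toReal) h
  simp only [mix_toReal ha0 ha1 P Q s, mix_toReal hc0 hc1 P Q s] at h'
  have hz : (a - c) * ((Q s).toReal - (P s).toReal) = 0 := by linear_combination h'
  rcases mul_eq_zero.mp hz with h1 | h1
  · exact absurd (sub_eq_zero.mp h1) hac
  · exact (ENNReal.toReal_eq_toReal_iff' (measure_ne_top P s) (measure_ne_top Q s)).mp
      (sub_eq_zero.mp h1).symm

theorem decoupled_converse {X : Type*} [MeasurableSpace X] (πt₀ πt₁ : ℝ)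
    (hπt₀ : πt₀ ∈ Set.Ico (0:ℝ) 1) (hπt₁ : πt₁ ∈ Set.Ico (0:ℝ) 1)
    (P₀ P₁ Pt₀ Pt₁ : Measure X)
    [IsProbabilityMeasure P₀] [IsProbabilityMeasure P₁]
    [IsProbabilityMeasure Pt₀] [IsProbabilityMeasure Pt₁]
    (hne : Pt₀ ≠ Pt₁)
    (hPt₀ : Pt₀ = mix πt₀ P₀ Pt₁) (hPt₁ : Pt₁ = mix πt₁ P₁ Pt₀) :
    P₀ ≠ P₁ ∧
    (πt₀ * (1 - πt₁) / (1 - πt₀ * πt₁)) + (πt₁ * (1 - πt₀) / (1 - πt₀ * πt₁)) < 1 ∧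
    Pt₀ = mix (πt₀ * (1 - πt₁) / (1 - πt₀ * πt₁)) P₀ P₁ ∧
    Pt₁ = mix (πt₁ * (1 - πt₀) / (1 - πt₀ * πt₁)) P₁ P₀ ∧
    ∀ a b : ℝ, a ∈ Set.Ico (0:ℝ) 1 → b ∈ Set.Ico (0:ℝ) 1 →
      Pt₀ = mix a P₀ P₁ → Pt₁ = mix b P₁ P₀ →
      a = πt₀ * (1 - πt₁) / (1 - πt₀ * πt₁) ∧
      b = πt₁ * (1 - πt₀) / (1 - πt₀ * πt₁) := by
  obtain ⟨h00, h01⟩ := hπt₀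
  obtain ⟨h10, h11⟩ := hπt₁
  have hd : (0:ℝ) < 1 - πt₀ * πt₁ := by nlinarith
  set p0 : ℝ := πt₀ * (1 - πt₁) / (1 - πt₀ * πt₁) with hp0
  set p1 : ℝ := πt₁ * (1 - πt₀) / (1 - πt₀ * πt₁) with hp1
  have hp00 : 0 ≤ p0 := by
    apply div_nonneg _ hd.le; nlinarith
  have hp01 : p0 ≤ 1 := by
    rw [hp0, div_le_one hd]; nlinarith
  have hp10 : 0 ≤ p1 := by
    apply div_nonneg _ hd.le; nlinarith
  have hp11 : p1 ≤ 1 := by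
    rw [hp1, div_le_one hd]; nlinarith
  -- the decoupled mixture identities
  have hMix0 : Pt₀ = mix p0 P₀ P₁ := by
    ext s hs
    have e0 : (Pt₀ s).toReal = (1 - πt₀) * (P₀ s).toReal + πt₀ * (Pt₁ s).toReal := by
      rw [hPt₀]; exact mix_toReal h00 h01.le P₀ Pt₁ s
    have e1 : (Pt₁ s).toReal = (1 - πt₁) * (P₁ s).toReal + πt₁ * (Pt₀ s).toReal := by
      rw [hPt₁]; exact mix_toReal h10 h11.le P₁ Pt₀ s
    refine (ENNReal.toReal_eq_toReal_iff' (measure_ne_top Pt₀ s) (mix_ne_top _ _ _ _)).mp ?_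
    rw [mix_toReal hp00 hp01 P₀ P₁ s, hp0]
    field_simp
    linear_combination e0 + πt₀ * e1
  have hMix1 : Pt₁ = mix p1 P₁ P₀ := by
    ext s hs
    have e0 : (Pt₀ s).toReal = (1 - πt₀) * (P₀ s).toReal + πt₀ * (Pt₁ s).toReal := by
      rw [hPt₀]; exact mix_toReal h00 h01.le P₀ Pt₁ s
    have e1 : (Pt₁ s).toReal = (1 - πt₁) * (P₁ s).toReal + πt₁ * (Pt₀ s).toReal := by
      rw [hPt₁]; exact mix_toReal h10 h11.le P₁ Pt₀ s
    refine (ENNReal.toReal_eq_toReal_iff' (measure_ne_top Pt₁ s) (mix_ne_top _ _ _ _)).mp ?_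
    rw [mix_toReal hp10 hp11 P₁ P₀ s, hp1]
    field_simp [show (1 - πt₁ * πt₀) ≠ 0 by nlinarith]
    linear_combination e1 + πt₁ * e0
  have hne01 : P₀ ≠ P₁ := by
    intro heq
    apply hne
    rw [hMix0, hMix1, heq, mix_self hp00 hp01, mix_self hp10 hp11]
  refine ⟨hne01, ?_, hMix0, hMix1, ?_⟩
  · rw [hp0, hp1, ← add_div, div_lt_one hd]; nlinarith
  · intro a b ha hb hA hB
    constructor
    · exact mix_inj ha.1 ha.2.le hp00 hp01 hne01 (hA ▸ hMix0)
    · exact mix_inj hb.1 hb.2.le hp10 hp11 (Ne.symm hne01) (hB ▸ hMix1)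
end

section
/- Let F, G, H be probability measures and γ ∈ [0,1] with F = (1-γ)G + γH. If G is irreducible with respect to H, then γ = ν*(F,H). -/
open MeasureTheory

theorem irreducible_component_gives_nuStar {X : Type*} [MeasurableSpace X]
    (F G H : Measure X)
    [IsProbabilityMeasure F] [IsProbabilityMeasure G] [IsProbabilityMeasure H]
    (γ : ℝ) (hγ : γ ∈ Set.Icc (0:ℝ) 1)
    (hmix : F = mix γ G H) (hirr : Irred G H) :
    γ = nuStar F H := by
  obtain ⟨hγ0, hγ1⟩ := hγ
  have hmem : γ ∈ nuSet F H := ⟨⟨hγ0, hγ1⟩, G, inferInstance, hmix⟩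
  have hub : ∀ α ∈ nuSet F H, α ≤ γ := by
    intro α hα
    by_contra hlt
    push_neg at hlt
    obtain ⟨⟨hα0, hα1⟩, G', hG', hF'⟩ := hα
    have hγlt1 : γ < 1 := lt_of_lt_of_le hlt hα1
    have h1γ : (0:ℝ) < 1 - γ := by linarith
    set β : ℝ := (α - γ) / (1 - γ) with hβdef
    have hβ0 : 0 < β := div_pos (by linarith) h1γ
    have hβ1 : β ≤ 1 := by
      rw [div_le_one h1γ]; linarith
    apply hirr
    refine ⟨β, G', hG', hβ0, hβ1, ?_⟩
    have heq : mix γ G H = mix α G' H := hmix ▸ hF'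
    ext s hs
    have hkey : ENNReal.ofReal (1 - γ) * G s
        = ENNReal.ofReal (1 - α) * G' s + ENNReal.ofReal (α - γ) * H s := by
      have h1 : ENNReal.ofReal (1 - γ) * G s + ENNReal.ofReal γ * H s
          = ENNReal.ofReal (1 - α) * G' s + ENNReal.ofReal α * H s := by
        have := congrArg (fun μ : Measure X => μ s) heq
        simpa [mix, Measure.add_apply, Measure.smul_apply, smul_eq_mul] using this
      have hsplit : ENNReal.ofReal α = ENNReal.ofReal (α - γ) + ENNReal.ofReal γ := by
        rw [← ENNReal.ofReal_add (by linarith) hγ0]; ring_nf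
      rw [hsplit, add_mul] at h1
      have hHfin : ENNReal.ofReal γ * H s ≠ ⊤ :=
        ENNReal.mul_ne_top ENNReal.ofReal_ne_top (measure_ne_top H s)
      have h2 : ENNReal.ofReal (1 - γ) * G s + ENNReal.ofReal γ * H s
          = (ENNReal.ofReal (1 - α) * G' s + ENNReal.ofReal (α - γ) * H s)
            + ENNReal.ofReal γ * H s := by rw [h1]; ring
      exact WithTop.add_right_cancel hHfin h2
    have hmixs : ENNReal.ofReal (1 - γ) * (mix β G' H) s
        = ENNReal.ofReal (1 - α) * G' s + ENNReal.ofReal (α - γ) * H s := by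
      have e1 : (1 - γ) * (1 - β) = 1 - α := by
        have hne : (1:ℝ) - γ ≠ 0 := h1γ.ne'
        rw [hβdef]; field_simp <;> ring
      have e2 : (1 - γ) * β = α - γ := by
        have hne : (1:ℝ) - γ ≠ 0 := h1γ.ne'
        rw [hβdef]; field_simp <;> ring
      have hb0 : (0:ℝ) ≤ 1 - β := by linarith
      calc ENNReal.ofReal (1 - γ) * (mix β G' H) s
          = ENNReal.ofReal (1 - γ) * (ENNReal.ofReal (1 - β) * G' s
            + ENNReal.ofReal β * H s) := by
            simp [mix, Measure.add_apply, Measure.smul_apply, smul_eq_mul]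
        _ = ENNReal.ofReal ((1 - γ) * (1 - β)) * G' s
            + ENNReal.ofReal ((1 - γ) * β) * H s := by
            rw [mul_add, ← mul_assoc, ← mul_assoc,
              ← ENNReal.ofReal_mul h1γ.le, ← ENNReal.ofReal_mul h1γ.le]
        _ = ENNReal.ofReal (1 - α) * G' s + ENNReal.ofReal (α - γ) * H s := by
            rw [e1, e2]
    have := hkey.trans hmixs.symm
    have hne0 : ENNReal.ofReal (1 - γ) ≠ 0 := by
      simp [ENNReal.ofReal_eq_zero]; linarith
    exact (ENNReal.mul_right_inj hne0 ENNReal.ofReal_ne_top).mp this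
  have hbdd : BddAbove (nuSet F H) := ⟨γ, hub⟩
  exact le_antisymm (le_csSup hbdd hmem) (csSup_le ⟨γ, hmem⟩ hub)
end

section
/- For any probability measures F and H on a measurable space (X, 𝔖), ν*(F,H) = inf over all measurable sets A with H(A) > 0 of F(A)/H(A). -/
open MeasureTheory

theorem nuStar_eq_inf_ratio {X : Type*} [MeasurableSpace X]
    (F H : Measure X) [IsProbabilityMeasure F] [IsProbabilityMeasure H] :
    nuStar F H =
      sInf {r : ℝ | ∃ A : Set X, MeasurableSet A ∧ 0 < H A ∧
        r = (F A).toReal / (H A).toReal} := by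
  set R : Set ℝ := {r : ℝ | ∃ A : Set X, MeasurableSet A ∧ 0 < H A ∧
        r = (F A).toReal / (H A).toReal} with hRdef
  have hS0 : (0:ℝ) ∈ nuSet F H := by
    refine ⟨⟨le_refl 0, zero_le_one⟩, F, inferInstance, ?_⟩
    simp [mix]
  have hR1 : (1:ℝ) ∈ R := by
    refine ⟨Set.univ, MeasurableSet.univ, by simp, by simp⟩
  have hRlb : ∀ r ∈ R, (0:ℝ) ≤ r := by
    rintro r ⟨A, hA, hHA, rfl⟩
    positivity
  have hRne : R.Nonempty := ⟨1, hR1⟩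
  have hRbdd : BddBelow R := ⟨0, hRlb⟩
  have hSbdd : BddAbove (nuSet F H) := ⟨1, fun α hα => hα.1.2⟩
  have key : ∀ α ∈ nuSet F H, ∀ r ∈ R, α ≤ r := by
    rintro α ⟨⟨hα0, hα1⟩, G', hG', hFeq⟩ r ⟨A, hA, hHA, rfl⟩
    have hFA : ENNReal.ofReal α * H A ≤ F A := by
      rw [hFeq]
      simp only [mix, Measure.add_apply, Measure.smul_apply, smul_eq_mul]
      exact le_add_self
    have hHt : (0:ℝ) < (H A).toReal := ENNReal.toReal_pos hHA.ne' (measure_ne_top _ _)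
    rw [le_div_iff₀ hHt]
    calc α * (H A).toReal = (ENNReal.ofReal α * H A).toReal := by
          rw [ENNReal.toReal_mul, ENNReal.toReal_ofReal hα0]
      _ ≤ (F A).toReal := ENNReal.toReal_mono (measure_ne_top _ _) hFA
  set β := sInf R with hβdef
  have hβ0 : 0 ≤ β := le_csInf hRne hRlb
  have hβ1 : β ≤ 1 := csInf_le hRbdd hR1
  have hle : ENNReal.ofReal β • H ≤ F := by
    rw [Measure.le_iff]
    intro s hs
    rw [Measure.smul_apply, smul_eq_mul]
    rcases eq_or_lt_of_le (zero_le : 0 ≤ H s) with hHs | hHs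
    · rw [← hHs, mul_zero]; exact zero_le
    · have hmem : (F s).toReal / (H s).toReal ∈ R := ⟨s, hs, hHs, rfl⟩
      have hβle : β ≤ (F s).toReal / (H s).toReal := csInf_le hRbdd hmem
      have hHt : (0:ℝ) < (H s).toReal := ENNReal.toReal_pos hHs.ne' (measure_ne_top _ _)
      have h1 : β * (H s).toReal ≤ (F s).toReal := (le_div_iff₀ hHt).mp hβle
      calc ENNReal.ofReal β * H s
          = ENNReal.ofReal β * ENNReal.ofReal (H s).toReal := by
            rw [ENNReal.ofReal_toReal (measure_ne_top _ _)]
        _ = ENNReal.ofReal (β * (H s).toReal) := (ENNReal.ofReal_mul hβ0).symm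
        _ ≤ ENNReal.ofReal (F s).toReal := ENNReal.ofReal_le_ofReal h1
        _ = F s := ENNReal.ofReal_toReal (measure_ne_top _ _)
  haveI : IsFiniteMeasure (ENNReal.ofReal β • H) := by
    constructor
    rw [Measure.smul_apply, smul_eq_mul, measure_univ, mul_one]
    exact ENNReal.ofReal_lt_top
  have hβS : β ∈ nuSet F H := by
    rcases eq_or_lt_of_le hβ1 with hβeq | hβlt
    · -- β = 1, so H ≤ F and since both are probability measures, F = H
      have hle' : H ≤ F := by simpa [hβeq] using hle
      have hsub : F - H = 0 := by
        rw [← Measure.measure_univ_eq_zero,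
          Measure.sub_apply MeasurableSet.univ hle', measure_univ, measure_univ, tsub_self]
      have hFH : F = H := by
        have := Measure.sub_add_cancel_of_le hle'
        rw [hsub, zero_add] at this
        exact this.symm
      refine ⟨⟨hβ0, hβ1⟩, F, inferInstance, ?_⟩
      rw [hβeq]
      simp [mix, hFH]
    · -- 0 ≤ β < 1
      set c := ENNReal.ofReal (1 - β) with hcdef
      have hc0 : c ≠ 0 := by
        simp [hcdef, ENNReal.ofReal_eq_zero, not_le, sub_pos, hβlt]
      have hctop : c ≠ ⊤ := ENNReal.ofReal_ne_top
      set G' : Measure X := c⁻¹ • (F - ENNReal.ofReal β • H) with hG'def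
      have hsubuniv : (F - ENNReal.ofReal β • H) Set.univ = c := by
        rw [Measure.sub_apply MeasurableSet.univ hle, Measure.smul_apply, smul_eq_mul,
          measure_univ, measure_univ, mul_one, hcdef, ENNReal.ofReal_sub _ hβ0,
          ENNReal.ofReal_one]
      haveI hG'prob : IsProbabilityMeasure G' := by
        constructor
        rw [hG'def, Measure.smul_apply, smul_eq_mul, hsubuniv]
        exact ENNReal.inv_mul_cancel hc0 hctop
      refine ⟨⟨hβ0, hβ1⟩, G', hG'prob, ?_⟩
      rw [mix, hG'def, smul_smul, ← hcdef, ENNReal.mul_inv_cancel hc0 hctop, one_smul,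
        Measure.sub_add_cancel_of_le hle]
  have h1 : nuStar F H ≤ β := csSup_le ⟨0, hS0⟩ (fun α hα => le_csInf hRne (key α hα))
  have h2 : β ≤ nuStar F H := le_csSup hSbdd hβS
  exact le_antisymm h1 h2
end

section
/- Let F and H be probability measures on ℝ absolutely continuous with respect to Lebesgue measure, with densities f and h. Then ν*(F,H) equals the essential infimum of f(x)/h(x) over x in the support of H (i.e., over {x : h(x) > 0}). -/
open MeasureTheory
open scoped ENNReal

theorem nuStar_eq_essInf_ratio
    (f h : ℝ → ℝ) (hf : Measurable f) (hh : Measurable h)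
    (hf0 : ∀ x, 0 ≤ f x) (hh0 : ∀ x, 0 ≤ h x)
    (F H : Measure ℝ) [IsProbabilityMeasure F] [IsProbabilityMeasure H]
    (hF : F = volume.withDensity fun x => ENNReal.ofReal (f x))
    (hH : H = volume.withDensity fun x => ENNReal.ofReal (h x)) :
    nuStar F H =
      essInf (fun x => f x / h x) (volume.restrict {x | 0 < h x}) := by
  classical
  have hf' : Measurable fun x => ENNReal.ofReal (f x) := hf.ennreal_ofReal
  have hh' : Measurable fun x => ENNReal.ofReal (h x) := hh.ennreal_ofReal
  have hsetm : MeasurableSet {x : ℝ | 0 < h x} := measurableSet_lt measurable_const hh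
  set μ' := volume.restrict {x : ℝ | 0 < h x} with hμ'def
  -- total integrals of the densities
  have hintf : ∫⁻ x, ENNReal.ofReal (f x) = 1 := by
    have hu := measure_univ (μ := F)
    rwa [hF, withDensity_apply _ MeasurableSet.univ, setLIntegral_univ] at hu
  have hinth : ∫⁻ x, ENNReal.ofReal (h x) = 1 := by
    have hu := measure_univ (μ := H)
    rwa [hH, withDensity_apply _ MeasurableSet.univ, setLIntegral_univ] at hu
  -- the integral of h' over {h > 0} is 1
  have hcompl : ∫⁻ x in {x : ℝ | 0 < h x}ᶜ, ENNReal.ofReal (h x) = 0 := by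
    rw [setLIntegral_congr_fun hsetm.compl
      (fun x hx => ?_), lintegral_zero]
    have : h x = 0 := le_antisymm (not_lt.mp hx) (hh0 x)
    simp [this]
  have hinths : ∫⁻ x in {x : ℝ | 0 < h x}, ENNReal.ofReal (h x) = 1 := by
    have := lintegral_add_compl (μ := volume) (fun x => ENNReal.ofReal (h x)) hsetm
    rw [hcompl, add_zero] at this
    rw [this, hinth]
  -- boundedness below
  have hbdd : Filter.IsBoundedUnder (· ≥ ·) (ae μ') (fun x => f x / h x) :=
    ⟨0, Filter.eventually_map.mpr
      (Filter.Eventually.of_forall fun x => div_nonneg (hf0 x) (hh0 x))⟩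
  -- coboundedness: frequently f/h ≤ 2
  have hfreq : ∃ᶠ x in ae μ', f x / h x ≤ 2 := by
    by_contra hcon
    rw [Filter.not_frequently] at hcon
    have h2 : ∀ᵐ x ∂μ', ENNReal.ofReal (2 * h x) ≤ ENNReal.ofReal (f x) := by
      filter_upwards [hcon, ae_restrict_mem hsetm] with x hx hmem
      exact ENNReal.ofReal_le_ofReal
        ((le_div_iff₀ hmem).mp (le_of_lt (lt_of_not_ge hx)))
    have hcalc : (2 : ℝ≥0∞) ≤ 1 := by
      calc (2 : ℝ≥0∞) = ∫⁻ x in {x : ℝ | 0 < h x}, ENNReal.ofReal (2 * h x) := by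
            simp_rw [ENNReal.ofReal_mul (by norm_num : (0:ℝ) ≤ 2)]
            rw [lintegral_const_mul _ hh', hinths]
            simp [ENNReal.ofReal_ofNat]
        _ ≤ ∫⁻ x in {x : ℝ | 0 < h x}, ENNReal.ofReal (f x) :=
            lintegral_mono_ae h2
        _ ≤ ∫⁻ x, ENNReal.ofReal (f x) := setLIntegral_le_lintegral _ _
        _ = 1 := hintf
    norm_num at hcalc
  have hcb : Filter.IsCoboundedUnder (· ≥ ·) (ae μ') (fun x => f x / h x) :=
    Filter.IsCoboundedUnder.of_frequently_le hfreq
  set β := essInf (fun x => f x / h x) μ' with hβdef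
  have hβliminf : β = Filter.liminf (fun x => f x / h x) (ae μ') := rfl
  -- β ≥ 0
  have h0β : 0 ≤ β := by
    rw [hβliminf]
    exact Filter.le_liminf_of_le hcb
      (Filter.Eventually.of_forall fun x => div_nonneg (hf0 x) (hh0 x))
  -- a.e. domination: β * h ≤ f a.e. (volume)
  have hdom : ∀ᵐ x, β * h x ≤ f x := by
    have h1 : ∀ᵐ x, x ∈ {x : ℝ | 0 < h x} → β ≤ f x / h x :=
      (ae_restrict_iff' hsetm).mp (ae_essInf_le hbdd)
    filter_upwards [h1] with x hx
    by_cases hxs : 0 < h x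
    · exact (le_div_iff₀ hxs).mp (hx hxs)
    · have hx0 : h x = 0 := le_antisymm (not_lt.mp hxs) (hh0 x)
      simpa [hx0] using hf0 x
  have hle : ∀ᵐ x, ENNReal.ofReal (β * h x) ≤ ENNReal.ofReal (f x) :=
    hdom.mono fun x hx => ENNReal.ofReal_le_ofReal hx
  have hβhm : Measurable fun x => ENNReal.ofReal (β * h x) :=
    (hh.const_mul β).ennreal_ofReal
  have hintβh : ∫⁻ x, ENNReal.ofReal (β * h x) = ENNReal.ofReal β := by
    simp_rw [ENNReal.ofReal_mul h0β]
    rw [lintegral_const_mul _ hh', hinth, mul_one]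
  -- β ≤ 1
  have hβ1 : β ≤ 1 := by
    have hofβ : ENNReal.ofReal β ≤ 1 := by
      rw [← hintβh, ← hintf]
      exact lintegral_mono_ae hle
    exact ENNReal.ofReal_le_one.mp hofβ
  -- β is a feasible mixture proportion
  have hmem : β ∈ nuSet F H := by
    refine ⟨⟨h0β, hβ1⟩, ?_⟩
    rcases eq_or_lt_of_le hβ1 with hβeq | hβlt
    · -- β = 1 : then F = H
      have hle1 : ∀ᵐ x, ENNReal.ofReal (h x) ≤ ENNReal.ofReal (f x) := by
        filter_upwards [hle] with x hx
        rwa [hβeq, one_mul] at hx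
      have hzero : ∫⁻ x, (ENNReal.ofReal (f x) - ENNReal.ofReal (h x)) = 0 := by
        rw [lintegral_sub hh' (by rw [hinth]; exact ENNReal.one_ne_top) hle1, hintf, hinth,
          tsub_self]
      have heqae : (fun x => ENNReal.ofReal (f x)) =ᵐ[volume]
          fun x => ENNReal.ofReal (h x) := by
        have := (lintegral_eq_zero_iff (hf'.sub hh')).mp hzero
        filter_upwards [this, hle1] with x h1 h2
        have : ENNReal.ofReal (f x) ≤ ENNReal.ofReal (h x) :=
          tsub_eq_zero_iff_le.mp h1
        exact le_antisymm this h2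
      have hFH : F = H := by rw [hF, hH, withDensity_congr_ae heqae]
      refine ⟨H, inferInstance, ?_⟩
      rw [hFH, hβeq]
      simp [mix]
    · -- β < 1 : construct the residual measure
      set c := ENNReal.ofReal (1 - β) with hcdef
      have hc0 : c ≠ 0 := (ENNReal.ofReal_pos.mpr (by linarith)).ne'
      have hcT : c ≠ ⊤ := ENNReal.ofReal_ne_top
      have hc1β : c = 1 - ENNReal.ofReal β := by
        rw [hcdef, ENNReal.ofReal_sub _ h0β, ENNReal.ofReal_one]
      set g : ℝ → ℝ≥0∞ :=
        fun x => c⁻¹ * (ENNReal.ofReal (f x) - ENNReal.ofReal (β * h x)) with hgdef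
      have hgm : Measurable g := (hf'.sub hβhm).const_mul _
      have hintsub :
          ∫⁻ x, (ENNReal.ofReal (f x) - ENNReal.ofReal (β * h x)) = c := by
        rw [lintegral_sub hβhm (by rw [hintβh]; exact ENNReal.ofReal_ne_top) hle,
          hintf, hintβh, hc1β]
      have hintg : ∫⁻ x, g x = 1 := by
        rw [hgdef]
        simp only
        rw [lintegral_const_mul _ (f := fun x => ENNReal.ofReal (f x) - ENNReal.ofReal (β * h x)) (hf'.sub hβhm), hintsub,
          ENNReal.inv_mul_cancel hc0 hcT]
      refine ⟨volume.withDensity g, ⟨?_⟩, ?_⟩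
      · rw [withDensity_apply _ MeasurableSet.univ, setLIntegral_univ, hintg]
      · rw [mix, hH, ← hcdef, ← withDensity_smul _ hgm, ← withDensity_smul _ hh',
          ← withDensity_add_left (hgm.const_smul c), hF]
        refine withDensity_congr_ae ?_
        filter_upwards [hle] with x hx
        show ENNReal.ofReal (f x) =
          c • g x + ENNReal.ofReal β • ENNReal.ofReal (h x)
        rw [hgdef]
        simp only [smul_eq_mul]
        rw [← mul_assoc, ENNReal.mul_inv_cancel hc0 hcT, one_mul,
          ← ENNReal.ofReal_mul h0β, tsub_add_cancel_of_le hx]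
  -- every feasible proportion is ≤ β
  have hub : ∀ α ∈ nuSet F H, α ≤ β := by
    rintro α ⟨⟨hα0, hα1⟩, G', hG', hFmix⟩
    have hleF : ENNReal.ofReal α • H ≤ F := by
      rw [hFmix, mix]
      exact Measure.le_add_left le_rfl
    have haeα : ∀ᵐ x, ENNReal.ofReal α * ENNReal.ofReal (h x) ≤
        ENNReal.ofReal (f x) := by
      refine ae_le_of_forall_setLIntegral_le_of_sigmaFinite
        (hh'.const_mul _) fun s hs _ => ?_
      calc ∫⁻ x in s, ENNReal.ofReal α * ENNReal.ofReal (h x)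
          = ENNReal.ofReal α * ∫⁻ x in s, ENNReal.ofReal (h x) :=
            lintegral_const_mul _ hh'
        _ = ENNReal.ofReal α * H s := by rw [hH, withDensity_apply _ hs]
        _ = (ENNReal.ofReal α • H) s := rfl
        _ ≤ F s := hleF s
        _ = ∫⁻ x in s, ENNReal.ofReal (f x) := by rw [hF, withDensity_apply _ hs]
    have haeα' : ∀ᵐ x, α * h x ≤ f x := by
      filter_upwards [haeα] with x hx
      rw [← ENNReal.ofReal_mul hα0] at hx
      exact (ENNReal.ofReal_le_ofReal_iff (hf0 x)).mp hx
    have hres : ∀ᵐ x ∂μ', α ≤ f x / h x := by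
      filter_upwards [ae_restrict_of_ae haeα', ae_restrict_mem hsetm] with x hx hmem
      exact (le_div_iff₀ hmem).mpr hx
    rw [hβliminf]
    exact Filter.le_liminf_of_le hcb hres
  -- conclude
  rw [nuStar]
  exact le_antisymm (csSup_le ⟨β, hmem⟩ hub)
    (le_csSup ⟨1, fun α hα => hα.1.2⟩ hmem)
end

section
/- Let π₀, π₁ ∈ [0,1) with π₀ + π₁ < 1. For a classifier f with true error rates R₀(f) = P₀(f=1) and R₁(f) = P₁(f=0), and contaminated error rates R̃₀(f) = (1-π₀)R₀(f) + π₀(1-R₁(f)) and R̃₁(f) = (1-π₁)R₁(f) + π₁(1-R₀(f)), one has, with π̃₀ = π₀/(1-π₁) and π̃₁ = π₁/(1-π₀): R₀(f) = 1 - R̃₁(f) - (1 - R̃₀(f) - R̃₁(f))/(1-π̃₀) and R₁(f) = 1 - R̃₀(f) - (1 - R̃₁(f) - R̃₀(f))/(1-π̃₁). -/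
theorem true_errors_from_contaminated (π₀ π₁ R₀ R₁ Rt₀ Rt₁ : ℝ)
    (hπ₀ : π₀ ∈ Set.Ico (0:ℝ) 1) (hπ₁ : π₁ ∈ Set.Ico (0:ℝ) 1)
    (hsum : π₀ + π₁ < 1)
    (hR₀ : R₀ ∈ Set.Icc (0:ℝ) 1) (hR₁ : R₁ ∈ Set.Icc (0:ℝ) 1)
    (hRt₀ : Rt₀ = (1 - π₀) * R₀ + π₀ * (1 - R₁))
    (hRt₁ : Rt₁ = (1 - π₁) * R₁ + π₁ * (1 - R₀)) :
    R₀ = 1 - Rt₁ - (1 - Rt₀ - Rt₁) / (1 - π₀ / (1 - π₁)) ∧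
    R₁ = 1 - Rt₀ - (1 - Rt₁ - Rt₀) / (1 - π₁ / (1 - π₀)) := by
  have h0 : (1:ℝ) - π₀ ≠ 0 := by intro h; linarith [hπ₀.2]
  have h1 : (1:ℝ) - π₁ ≠ 0 := by intro h; linarith [hπ₁.2]
  have h2 : (1:ℝ) - π₀ / (1 - π₁) ≠ 0 := by
    rw [sub_ne_zero]
    intro h
    have : π₀ = 1 - π₁ := by field_simp at h; linarith
    linarith
  have h3 : (1:ℝ) - π₁ / (1 - π₀) ≠ 0 := by
    rw [sub_ne_zero]
    intro h
    have : π₁ = 1 - π₀ := by field_simp at h; linarith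
    linarith
  have key0 : (1 - Rt₀ - Rt₁) / (1 - π₀ / (1 - π₁)) = (1 - π₁) * (1 - R₀ - R₁) := by
    rw [div_eq_iff h2, hRt₀, hRt₁]
    field_simp
    ring
  have key1 : (1 - Rt₁ - Rt₀) / (1 - π₁ / (1 - π₀)) = (1 - π₀) * (1 - R₀ - R₁) := by
    rw [div_eq_iff h3, hRt₀, hRt₁]
    field_simp
    ring
  rw [key0, key1, hRt₀, hRt₁]
  constructor <;> ring
end
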